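/- Suppose v_P(l_n) ≥ −q^s·⌊n/deg(P)⌋ for all n (coefficients of the logarithm series log_E = ∑ l_n τ^n). Then for every x in L_P^d with v_P(x) > 0, the series log_{E,P}(x) = ∑_{n≥0} l_n τ^n(x) converges P-adically; moreover if v_P(x) > q^s/(q^{deg P} − 1), then v_P(l_n τ^n(x)) ≥ v_P(x) for all n ≥ 1, so log_{E,P} is an isometry on the open disc {x : v_P(x) > q^s/(q^{deg P} − 1)}. -/

import Mathlib

lemma st8_coe_nsmul (m : ℕ) (r : ℚ) : (m • (r : WithTop ℚ)) = ((m * r : ℚ) : WithTop ℚ) := by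
  induction m with
  | zero => simp
  | succ k ih =>
    rw [succ_nsmul, ih, ← WithTop.coe_add]
    congr 1
    push_cast
    ring

lemma st8_nsmul_top (m : ℕ) (hm : m ≠ 0) : m • (⊤ : WithTop ℚ) = ⊤ := by
  obtain ⟨k, rfl⟩ := Nat.exists_eq_succ_of_ne_zero hm
  rw [succ_nsmul]; simp

lemma st8_top (a : WithTop ℚ) (h : ∀ N : ℚ, (N : WithTop ℚ) ≤ a) : a = ⊤ := by
  cases a with
  | top => rfl
  | coe r => exact absurd (h (r+1)) (by exact_mod_cast by linarith)

lemma st8_sqle (n : ℕ) : n^2 ≤ 2^(n+2) := by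
  induction n with
  | zero => norm_num
  | succ k ih =>
    have h1 : k < 2^k := Nat.lt_two_pow_self
    have h2 : 2^(k+2) = 2^k * 4 := by ring
    have h3 : 2^(k+3) = 2^k * 8 := by ring
    nlinarith [h1, ih, h2, h3]

lemma st8_key (q dP : ℕ) (hq : 2 ≤ q) (hdP : 0 < dP) (n : ℕ) :
    1 + (n / dP) * (q^dP - 1) ≤ q^n := by
  have hq1 : 1 ≤ q ^ dP := Nat.one_le_pow _ _ (by omega)
  have step : ∀ k : ℕ, 1 + k * (q^dP - 1) ≤ q^(dP * k) := by
    intro k; induction k with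
    | zero => simp
    | succ j ih =>
      have h1 : 1 ≤ q^(dP*j) := Nat.one_le_pow _ _ (by omega)
      have h2 : q^(dP*(j+1)) = q^(dP*j) * q^dP := by rw [Nat.mul_succ, pow_add]
      have h3 : q^dP - 1 ≤ q^(dP*j) * (q^dP - 1) := Nat.le_mul_of_pos_left _ (by omega)
      have h4 : q^(dP*j) + q^(dP*j) * (q^dP - 1) = q^(dP*j) * q^dP := by
        have h5 : 1 + (q^dP - 1) = q^dP := by omega
        calc q^(dP*j) + q^(dP*j)*(q^dP - 1) = q^(dP*j) * (1 + (q^dP - 1)) := by ring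
          _ = q^(dP*j) * q^dP := by rw [h5]
      calc 1 + (j+1)*(q^dP - 1) = (1 + j*(q^dP - 1)) + (q^dP - 1) := by ring
        _ ≤ q^(dP*j) + (q^dP - 1) := Nat.add_le_add_right ih _
        _ ≤ q^(dP*j) + q^(dP*j) * (q^dP - 1) := Nat.add_le_add_left h3 _
        _ = q^(dP*j) * q^dP := h4
        _ = q^(dP*(j+1)) := h2.symm
  refine le_trans (step (n/dP)) (Nat.pow_le_pow_right (by omega) ?_)
  rw [mul_comm]; exact Nat.div_mul_le_self n dP

lemma st8_grow (q : ℕ) (hq : 2 ≤ q) (A c₀ N : ℚ) (hA : 0 ≤ A) (hc : 0 < c₀) :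
    ∃ M : ℕ, ∀ n ≥ M, N + A * n ≤ (q:ℚ)^n * c₀ := by
  refine ⟨max 1 ⌈(4*(A + |N|))/c₀⌉₊, fun n hn => ?_⟩
  have hn1 : (1:ℚ) ≤ (n:ℚ) := by exact_mod_cast le_trans (le_max_left _ _) hn
  have hceil : (4*(A+|N|))/c₀ ≤ (n:ℚ) := by
    have h := le_trans (le_max_right 1 ⌈(4*(A + |N|))/c₀⌉₊) hn
    exact le_trans (Nat.le_ceil _) (by exact_mod_cast h)
  have h4 : 4*(A+|N|) ≤ n * c₀ := by rw [div_le_iff₀ hc] at hceil; linarith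
  have hsq : (n:ℚ)^2 ≤ 4 * (2:ℚ)^n := by
    have h := st8_sqle n
    have h' : ((n^2 : ℕ):ℚ) ≤ ((2^(n+2) : ℕ):ℚ) := by exact_mod_cast h
    push_cast at h'
    have h2 : (2:ℚ)^(n+2) = 4*2^n := by ring
    linarith
  have hqp : (2:ℚ)^n ≤ (q:ℚ)^n := by
    apply pow_le_pow_left₀ (by norm_num)
    exact_mod_cast hq
  have hNa : N ≤ |N| := le_abs_self N
  have habs : (0:ℚ) ≤ |N| := abs_nonneg N
  have key : (A + |N|) * n ≤ (q:ℚ)^n * c₀ := by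
    calc (A+|N|)*(n:ℚ) ≤ ((n:ℚ)*c₀/4)*n := by nlinarith
      _ = (n:ℚ)^2*c₀/4 := by ring
      _ ≤ (4*(2:ℚ)^n)*c₀/4 := by nlinarith
      _ = (2:ℚ)^n*c₀ := by ring
      _ ≤ (q:ℚ)^n*c₀ := by nlinarith
  nlinarith [key]

/-- (Convergence and isometry of the `P`-adic logarithm.)
Let `R` stand for `L_P` with its over-additive `P`-adic valuation `v` (extended
entrywise, with values in `WithTop ℚ`), `φ` the `q`-Frobenius (so `v(φ x) = q·v(x)`),
and `log_E = ∑ l_n τ^n` with `l_0 = I_d` and `v_P(l_n) ≥ −q^s⌊n/deg P⌋`.  Then for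
every `x ∈ L_P^d` with `v_P(x) > 0` the series `log_{E,P}(x) = ∑ l_n τ^n(x)` converges
`P`-adically (assuming `R` complete); moreover if `v_P(x) > q^s/(q^{deg P} − 1)` then
`v_P(l_n τ^n(x)) ≥ v_P(x)` for all `n ≥ 1`, and `log_{E,P}` is an isometry on that
disc: `v_P(log_{E,P}(x)) = v_P(x)`. -/
theorem stmt_8 {R : Type*} [CommRing R]
    (q dP s d : ℕ) (hq : 2 ≤ q) (hdP : 0 < dP) (hd : 0 < d) [NeZero d]
    (v : R → WithTop ℚ)
    (hv0 : v 0 = ⊤)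
    (hvadd : ∀ x y : R, min (v x) (v y) ≤ v (x + y))
    (hvmul : ∀ x y : R, v x + v y ≤ v (x * y))
    (φ : R →+* R) (hφ : ∀ x : R, v (φ x) = q • v x)
    (l : ℕ → Matrix (Fin d) (Fin d) R) (hl0 : l 0 = 1)
    (hl : ∀ n i j, ((-(q ^ s * (n / dP) : ℕ) : ℚ) : WithTop ℚ) ≤ v (l n i j))
    (hcomplete : ∀ f : ℕ → Fin d → R,
      (∀ N : ℚ, ∃ M, ∀ m ≥ M, ∀ k : ℕ, ∀ i, (N : WithTop ℚ) ≤ v (f (m + k) i - f m i)) →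
      ∃ y : Fin d → R, ∀ N : ℚ, ∃ M, ∀ m ≥ M, ∀ i, (N : WithTop ℚ) ≤ v (y i - f m i)) :
    ∀ x : Fin d → R, (∀ i, 0 < v (x i)) →
      ∃ y : Fin d → R,
        (∀ N : ℚ, ∃ M, ∀ m ≥ M, ∀ i, (N : WithTop ℚ)
            ≤ v (y i - (∑ n ∈ Finset.range m, (l n).mulVec fun j => φ^[n] (x j)) i)) ∧
        ((((q ^ s : ℚ) / ((q : ℚ) ^ dP - 1) : ℚ) : WithTop ℚ)
            < Finset.univ.inf (fun i => v (x i)) →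
          (∀ n : ℕ, 1 ≤ n → ∀ i,
            Finset.univ.inf (fun j => v (x j))
              ≤ v (((l n).mulVec fun j => φ^[n] (x j)) i)) ∧
          Finset.univ.inf (fun i => v (y i)) = Finset.univ.inf (fun i => v (x i))) := by
  intro x hx
  -- negation does not decrease the valuation
  have hneg : ∀ z : R, v z ≤ v (-z) := by
    have h1 : v (-1 : R) = q • v (-1 : R) := by
      have h := hφ (-1 : R); rwa [map_neg, map_one] at h
    have h2 : v (-1 : R) = 0 ∨ v (-1 : R) = ⊤ := by
      cases hb : v (-1 : R) with
      | top => right; rfl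
      | coe r =>
        left
        rw [hb, st8_coe_nsmul] at h1
        have hr : r = (q:ℚ) * r := by exact_mod_cast h1
        have hq' : (2:ℚ) ≤ (q:ℚ) := by exact_mod_cast hq
        have hr0 : r = 0 := by nlinarith
        exact_mod_cast hr0
    intro z
    have hm : v (-1 : R) + v z ≤ v (-z) := by
      have h := hvmul (-1) z; rwa [neg_one_mul] at h
    rcases h2 with h | h
    · rwa [h, zero_add] at hm
    · rw [h, top_add] at hm
      exact le_trans le_top hm
  -- valuation of finite sums
  have hsum : ∀ {ι : Type} (sf : Finset ι) (g : ι → R) (N : WithTop ℚ),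
      (∀ i ∈ sf, N ≤ v (g i)) → N ≤ v (∑ i ∈ sf, g i) := by
    intro ι sf g N
    classical
    refine Finset.cons_induction_on sf (fun _ => ?_) (fun a sf' ha ih h => ?_)
    · rw [Finset.sum_empty, hv0]; exact le_top
    · rw [Finset.sum_cons]
      refine le_trans (le_min (h a (Finset.mem_cons_self a sf')) ?_) (hvadd _ _)
      exact ih fun i hi => h i (Finset.mem_cons_of_mem hi)
  -- iterated Frobenius
  have hiter : ∀ (n : ℕ) (z : R), v (φ^[n] z) = q^n • v z := by
    intro n
    induction n with
    | zero => intro z; simp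
    | succ k ihk =>
      intro z
      rw [Function.iterate_succ_apply, ihk, hφ, ← mul_nsmul, ← pow_succ']
  set t : ℕ → Fin d → R := fun n => (l n).mulVec fun j => φ^[n] (x j) with ht_def
  set c : WithTop ℚ := Finset.univ.inf fun i => v (x i) with hc_def
  have hmv : ∀ n i, t n i = ∑ j, l n i j * φ^[n] (x j) := by
    intro n i
    rw [ht_def]
    simp [Matrix.mulVec, dotProduct]
  -- basic term bound
  have ht1 : ∀ (n : ℕ) (i : Fin d),
      ((-(q ^ s * (n / dP) : ℕ) : ℚ) : WithTop ℚ) + q^n • c ≤ v (t n i) := by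
    intro n i
    rw [hmv]
    refine hsum Finset.univ _ _ (fun j _ => ?_)
    refine le_trans ?_ (hvmul _ _)
    refine add_le_add (hl n i j) ?_
    rw [hiter]
    exact nsmul_le_nsmul_right (Finset.inf_le (Finset.mem_univ j)) _
  obtain ⟨i₀, -, hci⟩ :=
    Finset.exists_mem_eq_inf (Finset.univ : Finset (Fin d)) Finset.univ_nonempty
      (fun i => v (x i))
  have hc_pos : 0 < c := by rw [← hc_def] at hci; rw [hci]; exact hx i₀
  have hqn0 : ∀ n : ℕ, q ^ n ≠ 0 := fun n => (pow_pos (by omega) n).ne'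
  -- growth of the terms
  have hgrow : ∀ N : ℚ, ∃ M, ∀ n ≥ M, ∀ i, (N : WithTop ℚ) ≤ v (t n i) := by
    intro N
    by_cases hct : c = ⊤
    · refine ⟨0, fun n _ i => ?_⟩
      have h := ht1 n i
      rw [hct, st8_nsmul_top _ (hqn0 n), add_top] at h
      exact le_trans le_top h
    · obtain ⟨c₀, hcc⟩ := WithTop.ne_top_iff_exists.mp hct
      have hc₀ : 0 < c₀ := by
        rw [← hcc] at hc_pos; exact_mod_cast hc_pos
      obtain ⟨M, hM⟩ := st8_grow q hq ((q:ℚ)^s) c₀ N (by positivity) hc₀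
      refine ⟨M, fun n hn i => le_trans ?_ (ht1 n i)⟩
      rw [← hcc, st8_coe_nsmul, ← WithTop.coe_add, WithTop.coe_le_coe]
      have h1 : ((q ^ s * (n / dP) : ℕ) : ℚ) ≤ (q:ℚ)^s * n := by
        have hd1 : ((n/dP : ℕ):ℚ) ≤ (n:ℚ) := by exact_mod_cast Nat.div_le_self n dP
        push_cast
        have : (0:ℚ) ≤ (q:ℚ)^s := by positivity
        nlinarith
      have h2 := hM n hn
      push_cast
      push_cast at h1 h2
      linarith
  -- Cauchy property and the limit
  obtain ⟨y, hy⟩ := hcomplete (fun m => ∑ n ∈ Finset.range m, t n) (by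
    intro N
    obtain ⟨M, hM⟩ := hgrow N
    refine ⟨M, fun m hm k i => ?_⟩
    have hsplit : (∑ n ∈ Finset.range (m+k), t n) i - (∑ n ∈ Finset.range m, t n) i
        = ∑ n ∈ Finset.Ico m (m+k), t n i := by
      rw [Finset.sum_apply, Finset.sum_apply,
        ← Finset.sum_Ico_eq_sub _ (Nat.le_add_right m k)]
    rw [hsplit]
    exact hsum _ _ _ (fun n hn => hM n (le_trans hm (Finset.mem_Ico.mp hn).1) i))
  refine ⟨y, hy, ?_⟩
  intro hB
  set B : ℚ := (q:ℚ)^s / ((q:ℚ)^dP - 1) with hB_def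
  by_cases hct : c = ⊤
  · -- all valuations are infinite
    have htop : ∀ n i, v (t n i) = ⊤ := by
      intro n i
      have h := ht1 n i
      rw [hct, st8_nsmul_top _ (hqn0 n), add_top] at h
      exact top_unique h
    have hytop : ∀ i, v (y i) = ⊤ := by
      intro i
      apply st8_top
      intro N
      obtain ⟨M, hM⟩ := hy N
      have h1 := hM M le_rfl i
      have h2 : (N : WithTop ℚ) ≤ v ((∑ n ∈ Finset.range M, t n) i) := by
        rw [Finset.sum_apply]
        refine hsum _ _ _ fun n _ => ?_
        rw [htop n i]
        exact le_top
      have h3 := hvadd (y i - (∑ n ∈ Finset.range M, t n) i) ((∑ n ∈ Finset.range M, t n) i)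
      rw [show y i - (∑ n ∈ Finset.range M, t n) i + (∑ n ∈ Finset.range M, t n) i = y i
        from by ring] at h3
      exact le_trans (le_min h1 h2) h3
    constructor
    · intro n hn i
      exact le_trans le_top (le_of_eq (htop n i).symm)
    · rw [hct]
      refine top_unique (Finset.le_inf fun i _ => ?_)
      rw [hytop i]
  · obtain ⟨c₀, hcc⟩ := WithTop.ne_top_iff_exists.mp hct
    have hq2 : (2:ℚ) ≤ (q:ℚ) := by exact_mod_cast hq
    have hqdp : (q:ℚ) ≤ (q:ℚ)^dP := le_self_pow₀ (by linarith) hdP.ne'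
    have hden : (0:ℚ) < (q:ℚ)^dP - 1 := by linarith
    have hden1 : (1:ℚ) ≤ (q:ℚ)^dP - 1 := by linarith
    have hB0 : (0:ℚ) ≤ B := by rw [hB_def]; positivity
    have hBlt : B < c₀ := by
      rw [← hcc] at hB
      exact_mod_cast hB
    have hc₀ : 0 < c₀ := lt_of_le_of_lt hB0 hBlt
    set ε : ℚ := min c₀ (c₀ - B) with hε_def
    have hε1 : ε ≤ c₀ := min_le_left _ _
    have hε2 : ε ≤ c₀ - B := min_le_right _ _
    have hε : 0 < ε := lt_min hc₀ (by linarith)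
    have hBmul : B * ((q:ℚ)^dP - 1) = (q:ℚ)^s := by
      rw [hB_def]; field_simp
    -- strict bound on the terms for n ≥ 1
    have hterm : ∀ n, 1 ≤ n → ∀ i, ((c₀ + ε : ℚ) : WithTop ℚ) ≤ v (t n i) := by
      intro n hn i
      refine le_trans ?_ (ht1 n i)
      rw [← hcc, st8_coe_nsmul, ← WithTop.coe_add, WithTop.coe_le_coe]
      have hkey := st8_key q dP hq hdP n
      have hq1 : 1 ≤ q ^ dP := Nat.one_le_pow _ _ (by omega)
      have hkeyQ : 1 + ((n/dP : ℕ):ℚ)*((q:ℚ)^dP - 1) ≤ (q:ℚ)^n := by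
        have h' : ((1 + (n / dP) * (q^dP - 1) : ℕ) : ℚ) ≤ ((q^n : ℕ):ℚ) := by
          exact_mod_cast hkey
        rw [Nat.cast_add, Nat.cast_mul, Nat.cast_sub hq1] at h'
        push_cast at h' ⊢
        linarith
      have hqn2 : (2:ℚ) ≤ (q:ℚ)^n := le_trans hq2 (le_self_pow₀ (by linarith) (by omega))
      push_cast
      rcases Nat.eq_zero_or_pos (n / dP) with hk | hk
      · rw [hk]
        push_cast
        nlinarith
      · have hk1 : (1:ℚ) ≤ ((n/dP : ℕ):ℚ) := by exact_mod_cast hk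
        have hcb : (0:ℚ) ≤ c₀ - B := by linarith
        have e1 : ((n/dP:ℕ):ℚ)*((q:ℚ)^dP - 1)*c₀
            = ((n/dP:ℕ):ℚ)*(q:ℚ)^s + ((n/dP:ℕ):ℚ)*((q:ℚ)^dP - 1)*(c₀ - B) := by
          linear_combination ((n/dP:ℕ):ℚ) * hBmul
        have e2 : (c₀ - B) ≤ ((n/dP:ℕ):ℚ)*((q:ℚ)^dP - 1)*(c₀ - B) := by
          have hk2 : (1:ℚ) ≤ ((n/dP:ℕ):ℚ)*((q:ℚ)^dP - 1) := by nlinarith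
          have := mul_le_mul_of_nonneg_right hk2 hcb
          linarith
        have e3 : ((n/dP:ℕ):ℚ)*((q:ℚ)^dP - 1)*c₀ ≤ ((q:ℚ)^n - 1)*c₀ := by nlinarith
        linarith
    -- first claim
    have hfirst : ∀ n : ℕ, 1 ≤ n → ∀ i, c ≤ v (t n i) := by
      intro n hn i
      refine le_trans ?_ (hterm n hn i)
      rw [← hcc]
      exact_mod_cast (by linarith : c₀ ≤ c₀ + ε)
    refine ⟨fun n hn i => hfirst n hn i, ?_⟩
    -- the partial sums minus x are small
    obtain ⟨M, hM⟩ := hy (c₀ + ε)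
    set m := max M 1 with hm_def
    have hm1 : 1 ≤ m := le_max_right _ _
    have hmM : M ≤ m := le_max_left _ _
    have ht0 : ∀ i, t 0 i = x i := by
      intro i
      rw [ht_def]
      simp [hl0, Matrix.one_mulVec]
    have hfx : ∀ i, ((c₀ + ε : ℚ):WithTop ℚ) ≤ v ((∑ n ∈ Finset.range m, t n) i - x i) := by
      intro i
      have hsplit : (∑ n ∈ Finset.range m, t n) i - x i = ∑ n ∈ Finset.Ico 1 m, t n i := by
        have h1 : (∑ n ∈ Finset.range m, t n) i - x i
            = ∑ n ∈ Finset.range m, t n i - ∑ n ∈ Finset.range 1, t n i := by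
          rw [Finset.sum_apply, Finset.sum_range_one, ht0]
        rw [h1, ← Finset.sum_Ico_eq_sub _ hm1]
      rw [hsplit]
      exact hsum _ _ _ (fun n hn => hterm n (Finset.mem_Ico.mp hn).1 i)
    have hyx : ∀ i, ((c₀ + ε : ℚ):WithTop ℚ) ≤ v (y i - x i) := by
      intro i
      have hsp : y i - x i = (y i - (∑ n ∈ Finset.range m, t n) i)
          + ((∑ n ∈ Finset.range m, t n) i - x i) := by ring
      rw [hsp]
      exact le_trans (le_min (hM m hmM i) (hfx i)) (hvadd _ _)
    have hge : ∀ i, c ≤ v (y i) := by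
      intro i
      have hsp : y i = x i + (y i - x i) := by ring
      rw [hsp]
      refine le_trans (le_min (Finset.inf_le (Finset.mem_univ i)) ?_) (hvadd _ _)
      refine le_trans ?_ (hyx i)
      rw [← hcc]
      exact_mod_cast (by linarith : c₀ ≤ c₀ + ε)
    have hle : v (y i₀) ≤ c := by
      by_contra hlt
      push_neg at hlt
      have h1 : min (v (y i₀)) (v (x i₀ - y i₀)) ≤ v (x i₀) := by
        have h := hvadd (y i₀) (x i₀ - y i₀)
        rwa [show y i₀ + (x i₀ - y i₀) = x i₀ from by ring] at h
      have h2 : c < v (x i₀ - y i₀) := by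
        have hn := hneg (y i₀ - x i₀)
        rw [neg_sub] at hn
        refine lt_of_lt_of_le (lt_of_lt_of_le ?_ (hyx i₀)) hn
        rw [← hcc]
        exact_mod_cast (by linarith : c₀ < c₀ + ε)
      have h3 : c < v (x i₀) := lt_of_lt_of_le (lt_min hlt h2) h1
      rw [← hc_def] at hci
      rw [← hci] at h3
      exact lt_irrefl _ h3
    refine le_antisymm (le_trans (Finset.inf_le (Finset.mem_univ i₀)) hle) (Finset.le_inf fun i _ => hge i)
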